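/- Let n ≥ 1 be an integer and r > 0. The identity element (0,0) of the Heisenberg group H^n lies in the topological interior of the six-fold product set {h₁·h₂·h₃·h₄·h₅·h₆ : h₁,…,h₆ ∈ S_r^n}, where S_r^n = {(z,0) ∈ H^n : ‖z‖ = r} (equivalently, the support of the six-fold convolution power σ_r^{∗6} contains an open neighbourhood of the identity). -/

import Mathlib

open MeasureTheory

/-- The underlying space of the Heisenberg group `H^n = ℂ^n × ℝ`. -/
abbrev Heis (n : ℕ) := EuclideanSpace ℂ (Fin n) × ℝ

/-- The Heisenberg group multiplication
`(z,t)·(w,s) = (z+w, t+s+(1/2)Im⟨z,w⟩)` with `⟨z,w⟩ = ∑ j, z j * conj (w j)`. -/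
noncomputable def heisMul {n : ℕ} (p q : Heis n) : Heis n :=
  (p.1 + q.1, p.2 + q.2 + (1 / 2) * (∑ j, p.1 j * (starRingEnd ℂ) (q.1 j)).im)

/-- The sphere `S_r^n = {(z,0) : ‖z‖ = r}` in the Heisenberg group. -/
def heisSphere (n : ℕ) (r : ℝ) : Set (Heis n) := {p : Heis n | ‖p.1‖ = r ∧ p.2 = 0}


lemma sphere_decomp {n : ℕ} (i0 : Fin n) (r : ℝ) (hr : 0 < r) (w : EuclideanSpace ℂ (Fin n))
    (hw : ‖w‖ ≤ r) : ∃ z₁ z₂ : EuclideanSpace ℂ (Fin n),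
    ‖z₁‖ = r ∧ ‖z₂‖ = r ∧ z₁ + z₂ = w := by
  by_cases h0 : w = 0
  · refine ⟨EuclideanSpace.single i0 (r:ℂ), EuclideanSpace.single i0 (-(r:ℂ)), ?_, ?_, ?_⟩
    · simp [EuclideanSpace.norm_single, abs_of_pos hr]
    · simp [EuclideanSpace.norm_single, abs_of_pos hr]
    · ext j; simp [EuclideanSpace.single_apply, h0]; split <;> simp
  · have hw0 : (0:ℝ) < ‖w‖ := norm_pos_iff.mpr h0
    set μ : ℝ := Real.sqrt (r^2/‖w‖^2 - 1/4) with hμ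
    have hnn : (0:ℝ) ≤ r^2/‖w‖^2 - 1/4 := by
      have : (1:ℝ) ≤ r^2/‖w‖^2 := by
        rw [le_div_iff₀ (by positivity)]
        nlinarith
      linarith
    have hμsq : μ * μ = r^2/‖w‖^2 - 1/4 := Real.mul_self_sqrt hnn
    have key : ∀ c : ℂ, c.re = 1/2 → (c.im = μ ∨ c.im = -μ) → ‖c • w‖ = r := by
      intro c hre him
      rw [norm_smul, Complex.norm_def, Complex.normSq_apply, hre]
      have h2 : c.im * c.im = μ * μ := by rcases him with h | h <;> rw [h] <;> ring
      rw [h2, show ((1:ℝ)/2 * (1/2) + μ * μ) = r^2/‖w‖^2 by rw [hμsq]; ring]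
      rw [show r^2/‖w‖^2 = (r/‖w‖)^2 by ring, Real.sqrt_sq (by positivity)]
      field_simp
    refine ⟨((1/2 : ℂ) + (μ:ℂ)*Complex.I) • w, ((1/2 : ℂ) - (μ:ℂ)*Complex.I) • w, ?_, ?_, ?_⟩
    · exact key _ (by simp) (Or.inl (by simp))
    · exact key _ (by simp) (Or.inr (by simp))
    · rw [← add_smul]; norm_num

lemma im_sum_bound {n : ℕ} (z₁ z₂ : EuclideanSpace ℂ (Fin n)) :
    |(∑ j, z₁ j * (starRingEnd ℂ) (z₂ j)).im| ≤ ‖z₁‖ * ‖z₂‖ := by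
  have h : (∑ j, z₁ j * (starRingEnd ℂ) (z₂ j)) = (starRingEnd ℂ) (inner ℂ z₁ z₂ : ℂ) := by
    rw [PiLp.inner_apply, map_sum]
    simp [mul_comm]
  calc |(∑ j, z₁ j * (starRingEnd ℂ) (z₂ j)).im|
      ≤ ‖(∑ j, z₁ j * (starRingEnd ℂ) (z₂ j))‖ := Complex.abs_im_le_norm _
    _ = ‖(inner ℂ z₁ z₂ : ℂ)‖ := by rw [h, RCLike.norm_conj]
    _ ≤ ‖z₁‖ * ‖z₂‖ := norm_inner_le_norm _ _

lemma sum_single {n : ℕ} (i0 : Fin n) (a : EuclideanSpace ℂ (Fin n)) (γ : ℂ) :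
    (∑ j, a j * (starRingEnd ℂ) ((EuclideanSpace.single i0 γ) j)) = a i0 * (starRingEnd ℂ) γ := by
  rw [Finset.sum_eq_single i0] <;> simp [EuclideanSpace.single_apply]
  tauto

theorem stmt17 (n : ℕ) (hn : 1 ≤ n) (r : ℝ) (hr : 0 < r) :
    ((0, 0) : Heis n) ∈ interior {p : Heis n |
      ∃ h₁ ∈ heisSphere n r, ∃ h₂ ∈ heisSphere n r, ∃ h₃ ∈ heisSphere n r,
        ∃ h₄ ∈ heisSphere n r, ∃ h₅ ∈ heisSphere n r, ∃ h₆ ∈ heisSphere n r,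
          p = heisMul (heisMul (heisMul (heisMul (heisMul h₁ h₂) h₃) h₄) h₅) h₆} := by
  have i0 : Fin n := ⟨0, hn⟩
  rw [mem_interior]
  refine ⟨Metric.ball 0 (min r (r^2/2)), ?_, Metric.isOpen_ball,
    Metric.mem_ball_self (lt_min hr (by positivity))⟩
  rintro ⟨w, s⟩ hp
  rw [Metric.mem_ball, Prod.dist_eq, max_lt_iff] at hp
  obtain ⟨hw', hs'⟩ := hp
  have hw : ‖w‖ < r := by
    have := hw'.trans_le (min_le_left _ _); simpa using this
  have hs : |s| < r^2/2 := by
    have := hs'.trans_le (min_le_right _ _); simpa [Real.dist_eq] using this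
  obtain ⟨z₁, z₂, h1, h2, hsum⟩ := sphere_decomp i0 r hr w hw.le
  set t₁ : ℝ := (1/2) * (∑ j, z₁ j * (starRingEnd ℂ) (z₂ j)).im with ht₁
  set c : ℝ := s - t₁ with hc
  have ht₁b : |t₁| ≤ r^2/2 := by
    have h := im_sum_bound z₁ z₂
    rw [h1, h2] at h
    rw [ht₁, abs_mul]
    rw [abs_of_pos (by norm_num : (0:ℝ) < 1/2)]
    nlinarith
  have hcb : |c| < r^2 := by
    calc |c| ≤ |s| + |t₁| := abs_sub _ _
      _ < r^2 := by linarith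
  have hcr : (c/r)^2 ≤ r^2 := by
    rw [div_pow, div_le_iff₀ (by positivity)]
    have : |c| * |c| < r^2 * r^2 := by
      apply mul_lt_mul'' hcb hcb (abs_nonneg _) (abs_nonneg _)
    calc c^2 = |c| * |c| := by rw [← sq_abs c]; ring
      _ ≤ r^2 * r^2 := this.le
  set x : ℝ := Real.sqrt (r^2 - (c/r)^2) with hx
  have hxsq : x * x = r^2 - (c/r)^2 := Real.mul_self_sqrt (by linarith)
  set α : ℂ := Complex.ofReal x + Complex.ofReal (-(c/r)) * Complex.I with hα
  have hαre : α.re = x := by simp [hα]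
  have hαim : α.im = -(c/r) := by simp [hα]
  have hαnorm : ‖α‖ = r := by
    rw [Complex.norm_def, Complex.normSq_apply, hαre, hαim]
    rw [show x * x + -(c/r) * -(c/r) = r^2 by rw [hxsq]; ring]
    exact Real.sqrt_sq hr.le
  refine ⟨(z₁, 0), ⟨h1, rfl⟩, (z₂, 0), ⟨h2, rfl⟩,
    (EuclideanSpace.single i0 ((r:ℝ):ℂ), 0), ⟨by simp [abs_of_pos hr], rfl⟩,
    (EuclideanSpace.single i0 α, 0), ⟨by simp [hαnorm], rfl⟩,
    (EuclideanSpace.single i0 (-((r:ℝ):ℂ)), 0), ⟨by simp [abs_of_pos hr], rfl⟩,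
    (EuclideanSpace.single i0 (-α), 0), ⟨by simp [hαnorm], rfl⟩, ?_⟩
  simp only [heisMul, sum_single, Prod.mk.injEq]
  constructor
  · rw [← hsum]
    ext j
    simp only [PiLp.add_apply, EuclideanSpace.single_apply]
    by_cases hj : j = i0 <;> simp [hj] <;> ring
  · simp only [PiLp.add_apply, EuclideanSpace.single_apply, if_pos rfl]
    rw [hc] at *
    simp only [map_neg, Complex.add_im, Complex.mul_im, Complex.conj_re, Complex.conj_im,
      Complex.ofReal_re, Complex.ofReal_im, Complex.neg_im, Complex.neg_re, hαre, hαim,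
      Complex.add_re]
    simp only [if_true, hαre, hαim, Complex.ofReal_re, Complex.ofReal_im, Complex.neg_re,
      Complex.neg_im, Complex.add_re, Complex.add_im, Complex.mul_re, Complex.mul_im,
      Complex.I_re, Complex.I_im, ← ht₁]
    field_simp
    ring
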